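/- Let G be a P_k-containing, (P_k + tK_1)-free graph for some k ≤ 4 and t ≥ 1, with no isolated vertex. Then the domination number of G is at most t + 3, and consequently the semitotal domination number of G is at most 2t + 6. -/
import Mathlib


open SimpleGraph

/-- `D` is a dominating set of `G`. -/
def IsDomSet {V : Type*} [DecidableEq V] (G : SimpleGraph V) (D : Finset V) : Prop :=
  ∀ v, v ∉ D → ∃ u ∈ D, G.Adj u v

/-- `D` is a total dominating set of `G`. -/
def IsTotDomSet {V : Type*} [DecidableEq V] (G : SimpleGraph V) (D : Finset V) : Prop :=
  ∀ v : V, ∃ u ∈ D, G.Adj u v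

/-- `u` and `v` are distinct and within distance at most 2 in `G`. -/
def WithinTwo {V : Type*} (G : SimpleGraph V) (u v : V) : Prop :=
  G.Adj u v ∨ ∃ w, G.Adj u w ∧ G.Adj w v

/-- `D` is a semitotal dominating set of `G`. -/
def IsSemiTDSet {V : Type*} [DecidableEq V] (G : SimpleGraph V) (D : Finset V) : Prop :=
  IsDomSet G D ∧ ∀ v ∈ D, ∃ u ∈ D, u ≠ v ∧ WithinTwo G u v

/-- The domination number of `G`. -/
noncomputable def gamma {V : Type*} [Fintype V] [DecidableEq V] (G : SimpleGraph V) : ℕ :=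
  sInf {n | ∃ D : Finset V, IsDomSet G D ∧ D.card = n}

/-- The total domination number of `G`. -/
noncomputable def gammaT {V : Type*} [Fintype V] [DecidableEq V] (G : SimpleGraph V) : ℕ :=
  sInf {n | ∃ D : Finset V, IsTotDomSet G D ∧ D.card = n}

/-- The semitotal domination number of `G`. -/
noncomputable def gammaT2 {V : Type*} [Fintype V] [DecidableEq V] (G : SimpleGraph V) : ℕ :=
  sInf {n | ∃ D : Finset V, IsSemiTDSet G D ∧ D.card = n}

/-- The disjoint union `P_k + t·K_1` of a path on `k` vertices and `t` isolated vertices. -/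
def pathPlusIso (k t : ℕ) : SimpleGraph (Fin k ⊕ Fin t) :=
  SimpleGraph.fromRel (fun a b =>
    match a, b with
    | Sum.inl a, Sum.inl b => (pathGraph k).Adj a b
    | _, _ => False)

theorem pk_tk1_free_domination_bound {V : Type*} [Fintype V] [DecidableEq V]
    (G : SimpleGraph V) (k t : ℕ) (hk : k ≤ 4) (ht : 1 ≤ t)
    (hiso : ∀ v : V, ∃ u, G.Adj v u)
    (hPk : Nonempty (pathGraph k ↪g G))
    (hfree : IsEmpty (pathPlusIso k t ↪g G)) :
    gamma G ≤ t + 3 ∧ gammaT2 G ≤ 2 * t + 6 := by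
  classical
  obtain ⟨f⟩ := hPk
  set P : Finset V := Finset.univ.image (fun i => f i) with hPdef
  set X : Finset V := Finset.univ.filter (fun v => v ∉ P ∧ ∀ p ∈ P, ¬ G.Adj p v) with hXdef
  have hXmem : ∀ v, v ∈ X ↔ (v ∉ P ∧ ∀ p ∈ P, ¬ G.Adj p v) := by
    intro v; simp [hXdef]
  -- maximum-cardinality independent subset of X
  have hSne : (X.powerset.filter (fun s => ∀ u ∈ s, ∀ w ∈ s, ¬ G.Adj u w)).Nonempty :=
    ⟨∅, by simp⟩
  obtain ⟨I, hImem, hImax⟩ := Finset.exists_max_image _ Finset.card hSne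
  have hIX : I ⊆ X := Finset.mem_powerset.mp (Finset.mem_filter.mp hImem).1
  have hIind : ∀ u ∈ I, ∀ w ∈ I, ¬ G.Adj u w := (Finset.mem_filter.mp hImem).2
  -- card bound on I
  have hIt : I.card ≤ t - 1 := by
    by_contra hcon
    have ht' : t ≤ I.card := by omega
    obtain ⟨J, hJI, hJcard⟩ := Finset.exists_subset_card_eq ht'
    let eq : J ≃ Fin t := Finset.equivFinOfCardEq hJcard
    let e : Fin t → V := fun i => (eq.symm i : V)
    have heJ : ∀ i, e i ∈ J := fun i => (eq.symm i).2
    have heI : ∀ i, e i ∈ I := fun i => hJI (heJ i)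
    have heX : ∀ i, e i ∈ X := fun i => hIX (heI i)
    have heinj : Function.Injective e := by
      intro i j h
      have := Subtype.ext (p := fun x => x ∈ J) h
      exact eq.symm.injective this
    let g : Fin k ⊕ Fin t → V := Sum.elim (fun i => f i) e
    have ginj : Function.Injective g := by
      intro a b hab
      cases a with
      | inl a =>
        cases b with
        | inl b => exact congrArg Sum.inl (f.injective hab)
        | inr b =>
          exfalso
          simp only [g, Sum.elim_inl, Sum.elim_inr] at hab
          have hX := ((hXmem (e b)).mp (heX b)).1
          exact hX (by rw [← hab]; exact Finset.mem_image_of_mem _ (Finset.mem_univ a))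
      | inr a =>
        cases b with
        | inl b =>
          exfalso
          simp only [g, Sum.elim_inl, Sum.elim_inr] at hab
          have hX := ((hXmem (e a)).mp (heX a)).1
          exact hX (by rw [hab]; exact Finset.mem_image_of_mem _ (Finset.mem_univ b))
        | inr b => exact congrArg Sum.inr (heinj hab)
    have hrel : ∀ a b : Fin k ⊕ Fin t, G.Adj (g a) (g b) ↔ (pathPlusIso k t).Adj a b := by
      intro a b
      cases a with
      | inl a =>
        cases b with
        | inl b =>
          simp only [pathPlusIso, SimpleGraph.fromRel_adj, g, Sum.elim_inl]
          rw [f.map_adj_iff]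
          constructor
          · intro h
            exact ⟨fun hc => (pathGraph k).irrefl (Sum.inl_injective hc ▸ h), Or.inl h⟩
          · rintro ⟨hne, h | h⟩
            · exact h
            · exact h.symm
        | inr b =>
          simp only [pathPlusIso, SimpleGraph.fromRel_adj, g, Sum.elim_inl, Sum.elim_inr]
          constructor
          · intro h
            exact absurd h (((hXmem (e b)).mp (heX b)).2 _
              (Finset.mem_image_of_mem _ (Finset.mem_univ a)))
          · rintro ⟨-, h | h⟩ <;> exact h.elim
      | inr a =>
        cases b with
        | inl b =>
          simp only [pathPlusIso, SimpleGraph.fromRel_adj, g, Sum.elim_inl, Sum.elim_inr]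
          constructor
          · intro h
            exact absurd h.symm (((hXmem (e a)).mp (heX a)).2 _
              (Finset.mem_image_of_mem _ (Finset.mem_univ b)))
          · rintro ⟨-, h | h⟩ <;> exact h.elim
        | inr b =>
          simp only [pathPlusIso, SimpleGraph.fromRel_adj, g, Sum.elim_inr]
          constructor
          · intro h
            exact absurd h (hIind _ (heI a) _ (heI b))
          · rintro ⟨-, h | h⟩ <;> exact h.elim
    exact hfree.false ⟨⟨g, ginj⟩, fun {a b} => hrel a b⟩
  -- the dominating set
  set D₀ : Finset V := P ∪ I with hD₀def
  have hdom : IsDomSet G D₀ := by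
    intro v hv
    have hvP : v ∉ P := fun h => hv (Finset.mem_union_left _ h)
    have hvI : v ∉ I := fun h => hv (Finset.mem_union_right _ h)
    by_cases hvX : v ∈ X
    · -- v is dominated by I by maximality
      by_contra hno
      push_neg at hno
      have hnoI : ∀ u ∈ I, ¬ G.Adj u v := by
        intro u hu hadj
        exact hno u (Finset.mem_union_right _ hu) hadj
      have hins : insert v I ∈ X.powerset.filter (fun s => ∀ u ∈ s, ∀ w ∈ s, ¬ G.Adj u w) := by
        refine Finset.mem_filter.mpr ⟨Finset.mem_powerset.mpr ?_, ?_⟩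
        · exact Finset.insert_subset hvX hIX
        · intro u hu w hw hadj
          rcases Finset.mem_insert.mp hu with hu' | hu' <;>
            rcases Finset.mem_insert.mp hw with hw' | hw'
          · exact G.irrefl (hw' ▸ hu' ▸ hadj)
          · exact hnoI w hw' (hu' ▸ hadj).symm
          · exact hnoI u hu' (hw' ▸ hadj)
          · exact hIind u hu' w hw' hadj
      have := hImax _ hins
      rw [Finset.card_insert_of_notMem hvI] at this
      omega
    · -- v is dominated by P
      rw [hXmem] at hvX
      push_neg at hvX
      obtain ⟨p, hp, hadj⟩ := hvX hvP
      exact ⟨p, Finset.mem_union_left _ hp, hadj⟩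
  have hPcard : P.card ≤ k := by
    calc P.card ≤ (Finset.univ : Finset (Fin k)).card := Finset.card_image_le
    _ = k := by simp
  have hD₀card : D₀.card ≤ t + 3 := by
    rw [hD₀def]
    have h1 := Finset.card_union_le P I
    omega
  have hγ : gamma G ≤ t + 3 := by
    refine le_trans (Nat.sInf_le ⟨D₀, hdom, rfl⟩) hD₀card
  refine ⟨hγ, ?_⟩
  -- semitotal dominating set
  set nb : V → V := fun v => Classical.choose (hiso v) with hnbdef
  have nbspec : ∀ v : V, G.Adj v (nb v) := fun v => Classical.choose_spec (hiso v)
  set D' : Finset V := D₀ ∪ D₀.image nb with hD'def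
  have hdom' : IsDomSet G D' := by
    intro v hv
    have : v ∉ D₀ := fun h => hv (Finset.mem_union_left _ h)
    obtain ⟨u, hu, hadj⟩ := hdom v this
    exact ⟨u, Finset.mem_union_left _ hu, hadj⟩
  have hsemi : IsSemiTDSet G D' := by
    refine ⟨hdom', ?_⟩
    intro v hv
    rcases Finset.mem_union.mp hv with h | h
    · refine ⟨nb v, Finset.mem_union_right _ (Finset.mem_image_of_mem _ h), ?_, ?_⟩
      · exact fun hc => G.irrefl (hc ▸ nbspec v)
      · exact Or.inl (nbspec v).symm
    · obtain ⟨w, hw, rfl⟩ := Finset.mem_image.mp h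
      refine ⟨w, Finset.mem_union_left _ hw, (nbspec w).ne, Or.inl (nbspec w)⟩
  have hD'card : D'.card ≤ 2 * t + 6 := by
    rw [hD'def]
    have h1 := Finset.card_union_le D₀ (D₀.image nb)
    have h2 : (D₀.image nb).card ≤ D₀.card := Finset.card_image_le
    omega
  exact le_trans (Nat.sInf_le ⟨D', hsemi, rfl⟩) hD'card
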